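/- Let G be a group and T a countably infinite, locally finite subgroup of G. Regard the group ring ℤ[G] as a representation of T by restricting the left regular representation of G (T acts by left multiplication). Then the group cohomology H^s(T; ℤ[G]) vanishes for every natural number s ≠ 1. -/

import Mathlib

open Finsupp CategoryTheory

noncomputable section
namespace LFV

variable {G : Type} [Group G] {T : Subgroup G}

abbrev Ck (T : Subgroup G) (n : ℕ) : Type := (Fin n → T) → MonoidAlgebra ℤ G

instance : CoeFun (MonoidAlgebra ℤ G) (fun _ => G → ℤ) := ⟨fun f => f.coeff⟩

def myD (n : ℕ) (f : Ck T n) : Ck T (n + 1) := fun g =>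
  Representation.ofMulAction ℤ T G (g 0) (f fun i => g i.succ) +
    Finset.univ.sum fun j : Fin (n + 1) =>
      (-1 : ℤ) ^ ((j : ℕ) + 1) • f (Fin.contractNth j (· * ·) g)

theorem myD_eq_d (n : ℕ)
    (f : (groupCohomology.inhomogeneousCochains (Rep.ofMulAction ℤ T G)).X n) :
    (groupCohomology.inhomogeneousCochains (Rep.ofMulAction ℤ T G)).d n (n + 1) f = myD n f := by
  rw [groupCohomology.inhomogeneousCochains.d_def]
  rfl

variable (H : Subgroup T)

/-- orbit equivalence for the left multiplication action of `H` on `G` -/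
def rel (a b : G) : Prop := ∃ h : H, ((h : T) : G) * a = b

theorem rel_equiv : Equivalence (rel (T := T) H) :=
  ⟨fun a => ⟨1, by simp⟩,
   fun {a b} ⟨h, hh⟩ => ⟨h⁻¹, by rw [← hh]; push_cast; rw [inv_mul_cancel_left]⟩,
   fun {a b c} ⟨h, hh⟩ ⟨h', hh'⟩ => ⟨h' * h, by push_cast; rw [mul_assoc, hh, hh']⟩⟩

def sett : Setoid G := ⟨rel H, rel_equiv H⟩

/-- choice of orbit representative -/
def σ (g : G) : G := (@Quotient.mk _ (sett H) g).out

theorem σ_spec (g : G) : ∃ h : H, ((h : T) : G) * σ H g = g :=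
  Quotient.exact (Quotient.out_eq (@Quotient.mk _ (sett H) g))

theorem σ_rel {a b : G} (h : rel H a b) : σ H a = σ H b := by
  unfold σ
  congr 1
  exact Quotient.sound h

theorem σ_smul (h : H) (g : G) : σ H (((h : T) : G) * g) = σ H g :=
  (σ_rel H ⟨h, rfl⟩).symm

theorem σ_idem (g : G) : σ H (σ H g) = σ H g := σ_rel H (σ_spec H g)

/-- `τ H g` is the unique element of `H` with `τ H g * σ H g = g`. -/
def τ (g : G) : H := (σ_spec H g).choose

theorem τ_spec (g : G) : ((τ H g : T) : G) * σ H g = g := (σ_spec H g).choose_spec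

theorem τ_eq (g : G) (t : H) (ht : ((t : T) : G) * σ H g = g) : τ H g = t := by
  have h2 : ((τ H g : T) : G) * σ H g = ((t : T) : G) * σ H g := (τ_spec H g).trans ht.symm
  exact Subtype.ext (Subtype.ext (mul_right_cancel h2))

open Classical in
/-- the contracting homotopy -/
def kk (n : ℕ) (u : Ck T (n + 1)) : Ck T n := fun g =>
  ∑ᶠ h : H, Representation.ofMulAction ℤ T G (h : T)
    (MonoidAlgebra.ofCoeff ((u (Fin.cons ((h : T))⁻¹ g)).coeff.filter (fun x => σ H x = x)))

theorem kk_apply (hH : Finite H) (n : ℕ) (u : Ck T (n + 1)) (g : Fin n → T) (x : G) :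
    kk H n u g x = u (Fin.cons ((τ H x : T))⁻¹ g) (σ H x) := by
  classical
  have := hH
  letI : Fintype H := Fintype.ofFinite H
  rw [kk, finsum_eq_sum_of_fintype, MonoidAlgebra.coeff_sum, Finset.sum_apply']
  have key : ∀ h : H, (Representation.ofMulAction ℤ T G ((h : T))
      (MonoidAlgebra.ofCoeff ((u (Fin.cons ((h : T))⁻¹ g)).coeff.filter (fun y => σ H y = y)))) x
      = if h = τ H x then u (Fin.cons ((τ H x : T))⁻¹ g) (σ H x) else 0 := by
    intro h
    rw [Representation.ofMulAction_apply]
    have hsmul : ((h : T))⁻¹ • x = ((h : T) : G)⁻¹ * x := rfl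
    rw [hsmul, MonoidAlgebra.coeff_ofCoeff, Finsupp.filter_apply]
    have hσ : σ H (((h : T) : G)⁻¹ * x) = σ H x := by
      have h3 := σ_smul H h (((h : T) : G)⁻¹ * x)
      rw [mul_inv_cancel_left] at h3
      exact h3.symm
    by_cases hc : σ H (((h : T) : G)⁻¹ * x) = ((h : T) : G)⁻¹ * x
    · have hht : τ H x = h := τ_eq H x h (by rw [← hσ, hc, mul_inv_cancel_left])
      rw [if_pos hc, if_pos hht.symm, hht, ← hσ, hc]
    · rw [if_neg hc, if_neg]
      intro he
      apply hc
      rw [hσ]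
      have h4 := τ_spec H x
      rw [← he] at h4
      rw [← h4, inv_mul_cancel_left]
      rw [σ_smul H h, σ_idem]
  rw [Finset.sum_congr rfl fun h _ => key h]
  simp


theorem contract_zero_cons {α : Type*} [Mul α] {n : ℕ} (a : α) (g : Fin (n + 1) → α) :
    Fin.contractNth 0 (· * ·) (Fin.cons a g) = Fin.cons ((a * g 0 : α)) (fun i => g i.succ) := by
  funext k
  refine Fin.cases ?_ ?_ k
  · rw [Fin.contractNth_apply_of_eq _ _ _ _ (by simp), Fin.cons_zero]
    simp [Fin.castSucc_zero, Fin.cons_zero, Fin.cons_succ]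
  · intro j
    rw [Fin.contractNth_apply_of_gt _ _ _ _ (by simp), Fin.cons_succ, Fin.cons_succ]

theorem contract_succ_cons {α : Type*} [Mul α] {n : ℕ} (a : α) (g : Fin (n + 1) → α) (i : Fin (n + 1)) :
    Fin.contractNth i.succ (· * ·) (Fin.cons a g) = Fin.cons a (Fin.contractNth i (· * ·) g) := by
  funext k
  refine Fin.cases ?_ ?_ k
  · rw [Fin.contractNth_apply_of_lt _ _ _ _ (by simp), Fin.castSucc_zero, Fin.cons_zero,
      Fin.cons_zero]
  · intro j
    rw [Fin.cons_succ]
    rcases lt_trichotomy (j : ℕ) (i : ℕ) with h | h | h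
    · rw [Fin.contractNth_apply_of_lt _ _ _ _ (by simp [h]),
        Fin.contractNth_apply_of_lt _ _ _ _ h, ← Fin.succ_castSucc, Fin.cons_succ]
    · rw [Fin.contractNth_apply_of_eq _ _ _ _ (by simp [h]),
        Fin.contractNth_apply_of_eq _ _ _ _ h, ← Fin.succ_castSucc, Fin.cons_succ, Fin.cons_succ]
    · rw [Fin.contractNth_apply_of_gt _ _ _ _ (by simp [h]),
        Fin.contractNth_apply_of_gt _ _ _ _ h, Fin.cons_succ]

theorem myD_apply (n : ℕ) (f : Ck T n) (g : Fin (n + 1) → T) (x : G) :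
    myD n f g x = f (fun i => g i.succ) (((g 0 : G))⁻¹ * x) +
      Finset.univ.sum (fun j : Fin (n + 1) =>
        (-1 : ℤ) ^ ((j : ℕ) + 1) • f (Fin.contractNth j (· * ·) g) x) := by
  rw [myD, MonoidAlgebra.coeff_add, Finsupp.add_apply, Representation.ofMulAction_apply,
    MonoidAlgebra.coeff_sum, Finset.sum_apply']
  simp only [MonoidAlgebra.coeff_smul, Finsupp.smul_apply]
  rfl

theorem homotopy (hH : Finite H) (n : ℕ) (u : Ck T (n + 1)) (g : Fin (n + 1) → T)
    (hg0 : g 0 ∈ H) : myD n (kk H n u) g + kk H (n + 1) (myD (n + 1) u) g = u g := by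
  ext x
  have hτx := τ_spec H x
  set t : T := ((τ H x : T)) with ht
  -- fact about τ of translated point
  have hcoe : ((((⟨g 0, hg0⟩ : H)⁻¹ : H) : T) : G) = ((g 0 : G))⁻¹ := by push_cast; rfl
  have hσy : σ H (((g 0 : G))⁻¹ * x) = σ H x := by
    have h5 := σ_smul H (⟨g 0, hg0⟩ : H)⁻¹ x
    rwa [hcoe] at h5
  have hty : τ H (((g 0 : G))⁻¹ * x) = (⟨g 0, hg0⟩ : H)⁻¹ * τ H x := by
    apply τ_eq
    rw [hσy]
    push_cast
    rw [mul_assoc, hτx]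
  rw [MonoidAlgebra.coeff_add, Finsupp.add_apply, kk_apply H hH, myD_apply, kk_apply H hH, hσy, hty, myD_apply]
  have e1 : ∀ j : Fin (n + 1), kk H n u (Fin.contractNth j (· * ·) g) x
      = u (Fin.cons t⁻¹ (Fin.contractNth j (· * ·) g)) (σ H x) := fun j => kk_apply H hH _ _ _ _
  simp only [e1]
  have hc0 : ((Fin.cons t⁻¹ g : Fin (n + 2) → T)) 0 = t⁻¹ := by simp
  have hcs : (fun i : Fin (n + 1) => (Fin.cons t⁻¹ g : Fin (n + 2) → T) i.succ) = g := by
    funext i; exact Fin.cons_succ _ _ _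
  rw [hcs]
  have hpt : ((((Fin.cons t⁻¹ g : Fin (n + 2) → T) 0 : T) : G))⁻¹ * σ H x = x := by
    rw [hc0]
    push_cast
    rw [inv_inv, hτx]
  rw [hpt]
  have hinv : (((⟨g 0, hg0⟩ : H)⁻¹ * τ H x : H) : T)⁻¹ = t⁻¹ * g 0 := by
    push_cast
    rw [mul_inv_rev, inv_inv, ← ht]
  rw [hinv]
  rw [Fin.sum_univ_succ (f := fun j : Fin (n + 2) =>
    (-1 : ℤ) ^ ((j : ℕ) + 1) • u (Fin.contractNth j (· * ·) (Fin.cons t⁻¹ g : Fin (n + 2) → T)) (σ H x))]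
  rw [contract_zero_cons]
  simp only [contract_succ_cons]
  have hsgn : ∀ j : Fin (n + 1), (-1 : ℤ) ^ ((j.succ : ℕ) + 1) = -((-1 : ℤ) ^ ((j : ℕ) + 1)) := by
    intro j
    rw [Fin.val_succ, pow_succ]
    ring
  simp only [hsgn, neg_smul, Fin.val_zero, pow_one, neg_smul, one_smul]
  rw [Finset.sum_neg_distrib]
  abel

theorem contract_mem {S' : Subgroup T} {n : ℕ} {g : Fin (n + 1) → T} (hg : ∀ i, g i ∈ S')
    (j : Fin (n + 1)) (k : Fin n) : Fin.contractNth j (· * ·) g k ∈ S' := by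
  rcases lt_trichotomy (k : ℕ) (j : ℕ) with h | h | h
  · rw [Fin.contractNth_apply_of_lt _ _ _ _ h]; exact hg _
  · rw [Fin.contractNth_apply_of_eq _ _ _ _ h]; exact mul_mem (hg _) (hg _)
  · rw [Fin.contractNth_apply_of_gt _ _ _ _ h]; exact hg _

theorem myD_sub (n : ℕ) (a b : Ck T n) : myD n (a - b) = myD n a - myD n b := by
  rw [← myD_eq_d n (a - b), ← myD_eq_d n a, ← myD_eq_d n b]
  exact map_sub _ a b

theorem myDsq (m : ℕ) (v : Ck T m) : myD (m + 1) (myD m v) = 0 := by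
  have h2 := (groupCohomology.inhomogeneousCochains (Rep.ofMulAction ℤ T G)).d_comp_d
    m (m + 1) (m + 2)
  have h3 := congrArg (fun φ => ModuleCat.Hom.hom φ v) h2
  simp only [ModuleCat.hom_comp, LinearMap.comp_apply, ModuleCat.hom_zero, LinearMap.zero_apply] at h3
  rw [← myD_eq_d m v, ← myD_eq_d (m + 1)
    ((groupCohomology.inhomogeneousCochains (Rep.ofMulAction ℤ T G)).d m (m + 1) v)]
  exact h3

theorem exists_chain (T : Subgroup G) [Countable T]
    (hLF : ∀ H : Subgroup T, H.FG → Finite H) :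
    ∃ S : ℕ → Subgroup T, Monotone S ∧ (∀ n, Finite (S n)) ∧ ∀ t : T, ∃ n, t ∈ S n := by
  obtain ⟨e, he⟩ := exists_surjective_nat T
  refine ⟨fun n => Subgroup.closure (e '' Set.Iic n), ?_, ?_, ?_⟩
  · intro a b hab
    exact Subgroup.closure_mono (Set.image_mono (Set.Iic_subset_Iic.2 hab))
  · intro n
    apply hLF
    rw [Subgroup.fg_iff]
    exact ⟨e '' Set.Iic n, rfl, ((Set.finite_Iic n).image e)⟩
  · intro t
    obtain ⟨n, rfl⟩ := he t
    exact ⟨n, Subgroup.subset_closure ⟨n, Set.self_mem_Iic, rfl⟩⟩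

theorem tuple_bound {S : ℕ → Subgroup T} (hmono : Monotone S)
    (hmem : ∀ t : T, ∃ n, t ∈ S n) {j : ℕ} (g : Fin j → T) : ∃ n, ∀ i, g i ∈ S n := by
  choose N hN using hmem
  exact ⟨Finset.univ.sup fun i => N (g i),
    fun i => hmono (Finset.le_sup (Finset.mem_univ i)) (hN (g i))⟩

end LFV

section
open LFV

/-- If `T` is a countably infinite, locally finite subgroup of `G`, and `ℤ[G]` is regarded
as a representation of `T` by restricting the left regular representation of `G` (so `T`
acts by left multiplication on basis elements), then `H^s(T; ℤ[G]) = 0` for all `s ≠ 1`. -/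
theorem groupCohomology_restriction_leftRegular_vanishes
    {G : Type} [Group G] (T : Subgroup G) [Countable T] [Infinite T]
    (hLF : ∀ H : Subgroup T, H.FG → Finite H) :
    ∀ s : ℕ, s ≠ 1 → Subsingleton (groupCohomology (Rep.ofMulAction ℤ T G) s) := by
  intro s hs
  have key : (groupCohomology.inhomogeneousCochains (Rep.ofMulAction ℤ T G)).ExactAt s := by
    match s, hs with
    | 0, _ =>
      rw [HomologicalComplex.exactAt_iff' _ 0 0 1 (by simp) (by simp),
        ShortComplex.moduleCat_exact_iff]
      intro f hf
      have hDf : myD 0 (f : Ck T 0) = 0 := by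
        exact (myD_eq_d _ f).symm.trans hf
      suffices hgen : ∀ F : Ck T 0, myD 0 F = 0 → F = 0 by
        refine ⟨f, ?_⟩
        show (groupCohomology.inhomogeneousCochains (Rep.ofMulAction ℤ T G)).d 0 0 f = f
        rw [HomologicalComplex.shape _ _ _ (by simp)]
        refine Eq.trans ?_ (hgen f hDf).symm
        rfl
      intro F hDF
      have hinv : ∀ (t : T) (x : G), F default ((t : G)⁻¹ * x) = F default x := by
        intro t x
        have h1 := congrFun hDF fun _ => t
        rw [Pi.zero_apply] at h1
        have h1x : myD 0 F (fun _ => t) x = (0 : MonoidAlgebra ℤ G).coeff x := by rw [h1]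
        rw [myD_apply] at h1x
        simp only [Finset.univ_unique, Finset.sum_singleton, MonoidAlgebra.coeff_zero, Finsupp.coe_zero,
          Pi.zero_apply] at h1x
        have h3 : ∀ v : Fin 0 → T, F v = F default := fun v => by
          rw [Subsingleton.elim v default]
        rw [Fin.sum_univ_one, h3 (Fin.contractNth _ _ _), h3 (fun i => _)] at h1x
        have h4 := add_eq_zero_iff_eq_neg.mp h1x
        rw [h4]
        simp
      have hv : F default = 0 := by
        by_contra hne
        obtain ⟨x0, hx0⟩ := Finsupp.support_nonempty_iff.2 (fun h => hne (MonoidAlgebra.coeff_eq_zero.1 h))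
        have hmap : ∀ t : T, ((t : G)⁻¹ * x0) ∈ (F default).coeff.support := by
          intro t
          rw [Finsupp.mem_support_iff] at hx0 ⊢
          rw [hinv t x0]
          exact hx0
        have hinj : Function.Injective
            (fun t : T => (⟨(t : G)⁻¹ * x0, hmap t⟩ :
              {y : G // y ∈ (F default).coeff.support})) := by
          intro a b hab
          have h4 := congrArg Subtype.val hab
          have h5 := mul_right_cancel h4
          exact Subtype.ext (inv_injective h5)
        have := Infinite.of_injective _ hinj
        exact not_finite {y : G // y ∈ (F default).coeff.support}
      funext v
      rw [Subsingleton.elim v default, hv]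
      rfl
    | (m + 2), _ =>
      rw [HomologicalComplex.exactAt_iff' _ (m + 1) (m + 2) (m + 3) (by simp) (by simp),
        ShortComplex.moduleCat_exact_iff]
      intro f hf
      obtain ⟨S, hmono, hfin, hmem⟩ := exists_chain T hLF
      have hDf : myD (m + 2) (f : Ck T (m + 2)) = 0 := by
        exact (myD_eq_d _ f).symm.trans hf
      set u : ℕ → Ck T (m + 1) := fun n => kk (S n) (m + 1) f with hu_def
      set c : ℕ → Ck T (m + 1) := fun n => Nat.rec (u 0)
        (fun n cn => u (n + 1) - myD m (kk (S n) m (u (n + 1) - cn))) n with hc_def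
      have hc0 : c 0 = u 0 := rfl
      have hcsucc : ∀ n, c (n + 1) = u (n + 1) - myD m (kk (S n) m (u (n + 1) - c n)) :=
        fun n => rfl
      have hu : ∀ n (g : Fin (m + 2) → T), g 0 ∈ S n → myD (m + 1) (u n) g = f g := by
        intro n g hg
        have h := homotopy (H := S n) (hfin n) (m + 1) f g hg
        rw [hDf] at h
        have hz : kk (S n) (m + 2) (0 : Ck T (m + 3)) g = 0 := by
          ext x
          rw [kk_apply _ (hfin n)]
          simp
        rw [hz, add_zero] at h
        exact h
      have hInv1 : ∀ n (g : Fin (m + 2) → T), g 0 ∈ S n → myD (m + 1) (c n) g = f g := by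
        intro n
        cases n with
        | zero => exact fun g hg => hu 0 g hg
        | succ n =>
          intro g hg
          rw [hcsucc n, myD_sub, myDsq, sub_zero]
          exact hu (n + 1) g hg
      have hInv2 : ∀ n (g : Fin (m + 1) → T), g 0 ∈ S n → c (n + 1) g = c n g := by
        intro n g hg
        have hW : ∀ v : Fin (m + 2) → T, v 0 ∈ S n →
            myD (m + 1) (u (n + 1) - c n) v = 0 := by
          intro v hv
          rw [myD_sub, Pi.sub_apply, hu (n + 1) v (hmono (Nat.le_succ n) hv),
            hInv1 n v hv, sub_self]
        have h := homotopy (H := S n) (hfin n) m (u (n + 1) - c n) g hg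
        have hz : kk (S n) (m + 1) (myD (m + 1) (u (n + 1) - c n)) g = 0 := by
          ext x
          rw [kk_apply _ (hfin n)]
          rw [hW _ ?_]
          · simp
          · rw [Fin.cons_zero]
            exact inv_mem (SetLike.coe_mem (τ (S n) x))
        rw [hz, add_zero] at h
        rw [hcsucc n, Pi.sub_apply, h, Pi.sub_apply]
        abel
      have hstab : ∀ (k l : ℕ), k ≤ l → ∀ g : Fin (m + 1) → T, g 0 ∈ S k → c l g = c k g := by
        intro k l hkl
        induction l, hkl using Nat.le_induction with
        | base => exact fun g hg => rfl
        | succ l hkl ih =>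
          intro g hg
          rw [hInv2 l g (hmono hkl hg), ih g hg]
      choose Nf hNf using hmem
      set cinf : Ck T (m + 1) := fun g => c (Nf (g 0)) g with hcinf_def
      have hagree : ∀ (n : ℕ) (g : Fin (m + 1) → T), g 0 ∈ S n → cinf g = c n g := by
        intro n g hg
        have h1 : c (max (Nf (g 0)) n) g = c (Nf (g 0)) g :=
          hstab _ _ (le_max_left _ _) g (hNf _)
        have h2 : c (max (Nf (g 0)) n) g = c n g := hstab _ _ (le_max_right _ _) g hg
        show c (Nf (g 0)) g = c n g
        rw [← h1, h2]
      refine ⟨cinf, ?_⟩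
      show (groupCohomology.inhomogeneousCochains (Rep.ofMulAction ℤ T G)).d (m + 1) (m + 2)
        cinf = f
      rw [myD_eq_d]
      funext g
      obtain ⟨n, hn⟩ := tuple_bound hmono (fun t => ⟨Nf t, hNf t⟩) g
      have e1 : cinf (fun i => g i.succ) = c n (fun i => g i.succ) := hagree n (fun i => g i.succ) (hn _)
      have e2 : ∀ j : Fin (m + 2), cinf (Fin.contractNth j (· * ·) g)
          = c n (Fin.contractNth j (· * ·) g) :=
        fun j => hagree n (Fin.contractNth j (· * ·) g) (contract_mem hn j 0)
      have : myD (m + 1) cinf g = myD (m + 1) (c n) g := by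
        rw [myD, myD]
        rw [e1]
        congr 1
        refine Finset.sum_congr rfl fun j _ => ?_
        rw [e2 j]
      rw [this]
      exact hInv1 n g (hn 0)
    | 1, h => exact absurd rfl h
  rw [HomologicalComplex.exactAt_iff_isZero_homology] at key
  constructor
  intro a b
  have h0 : (𝟙 (groupCohomology (Rep.ofMulAction ℤ T G) s) :
      groupCohomology (Rep.ofMulAction ℤ T G) s ⟶ _) = 0 := key.eq_of_src _ _
  have ha : a = (𝟙 (groupCohomology (Rep.ofMulAction ℤ T G) s) :
      groupCohomology (Rep.ofMulAction ℤ T G) s ⟶ _) a := rfl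
  have hb : b = (𝟙 (groupCohomology (Rep.ofMulAction ℤ T G) s) :
      groupCohomology (Rep.ofMulAction ℤ T G) s ⟶ _) b := rfl
  rw [ha, hb, h0]
  rfl

end
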